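/- Let h₁,…,h_d ∈ ℝ^{d(d+1)/2} be orthonormal vectors, and for each i let H_i be the symmetric d×d matrix associated with h_i. Let Υ₀ = (vec(H₁),…,vec(H_d)) be the d² × d matrix with these vectorizations as columns. Then for every x ∈ ℝ^d with |x|₂ = 1, one has 1/2 ≤ |Υ₀ x|₂² ≤ 1; equivalently, every singular value σ of Υ₀ satisfies 1/√2 ≤ σ ≤ 1. -/

import Mathlib

open Matrix

/-- The symmetric `d × d` matrix associated with a vector
`h = (h_{1,1},…,h_{1,d},h_{2,2},…,h_{d,d})ᵀ ∈ ℝ^{d(d+1)/2}`: diagonal entries `h_{i,i}`,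
off-diagonal entries `h_{i,j}/2` for `i < j`. -/
noncomputable def symOf {d : ℕ} (h : {pr : Fin d × Fin d // pr.1 ≤ pr.2} → ℝ) :
    Matrix (Fin d) (Fin d) ℝ :=
  Matrix.of fun i j =>
    if hlt : i < j then h ⟨(i, j), le_of_lt hlt⟩ / 2
    else if hgt : j < i then h ⟨(j, i), le_of_lt hgt⟩ / 2
    else h ⟨(i, j), not_lt.mp hgt⟩

private lemma symOf_symm {d : ℕ} (g : {pr : Fin d × Fin d // pr.1 ≤ pr.2} → ℝ) (p q : Fin d) :
    symOf g p q = symOf g q p := by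
  unfold symOf
  rcases lt_trichotomy p q with hlt | heq | hgt
  · simp only [Matrix.of_apply]
    rw [dif_pos hlt, dif_neg (not_lt.2 hlt.le), dif_pos hlt]
  · subst heq; rfl
  · simp only [Matrix.of_apply]
    rw [dif_neg (not_lt.2 hgt.le), dif_pos hgt, dif_pos hgt]

theorem stmt18 (d : ℕ)
    (h : Fin d → ({pr : Fin d × Fin d // pr.1 ≤ pr.2} → ℝ))
    (horth : ∀ i j, h i ⬝ᵥ h j = if i = j then (1 : ℝ) else 0)
    (Υ₀ : Matrix (Fin d × Fin d) (Fin d) ℝ)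
    (hΥ₀ : ∀ pr i, Υ₀ pr i = symOf (h i) pr.1 pr.2) :
    ∀ x : Fin d → ℝ, x ⬝ᵥ x = 1 →
      1 / 2 ≤ Υ₀.mulVec x ⬝ᵥ Υ₀.mulVec x ∧ Υ₀.mulVec x ⬝ᵥ Υ₀.mulVec x ≤ 1 := by
  intro x hx
  classical
  set g : {pr : Fin d × Fin d // pr.1 ≤ pr.2} → ℝ := fun s => ∑ i, x i * h i s with hgdef
  -- the matrix-vector product is the symmetric matrix of g
  have hmv : ∀ pr : Fin d × Fin d, Υ₀.mulVec x pr = symOf g pr.1 pr.2 := by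
    intro pr
    simp only [Matrix.mulVec, dotProduct, hΥ₀, symOf, Matrix.of_apply, hgdef]
    split_ifs with h1 h2
    · rw [Finset.sum_div]
      exact Finset.sum_congr rfl fun i _ => by ring
    · rw [Finset.sum_div]
      exact Finset.sum_congr rfl fun i _ => by ring
    · exact Finset.sum_congr rfl fun i _ => by ring
  -- g is a unit vector
  have hgg : (∑ s : {pr : Fin d × Fin d // pr.1 ≤ pr.2}, g s * g s) = 1 := by
    have key : ∀ i j : Fin d,
        (∑ s : {pr : Fin d × Fin d // pr.1 ≤ pr.2}, (x i * h i s) * (x j * h j s))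
          = x i * x j * (if i = j then (1 : ℝ) else 0) := by
      intro i j
      rw [← horth i j]
      simp only [dotProduct, Finset.mul_sum]
      exact Finset.sum_congr rfl fun s _ => by ring
    calc (∑ s : {pr : Fin d × Fin d // pr.1 ≤ pr.2}, g s * g s)
        = ∑ i, ∑ j, ∑ s : {pr : Fin d × Fin d // pr.1 ≤ pr.2},
            (x i * h i s) * (x j * h j s) := by
          simp only [hgdef, Finset.sum_mul, Finset.mul_sum]
          rw [Finset.sum_comm]
          refine Finset.sum_congr rfl fun i _ => ?_
          rw [Finset.sum_comm]
          exact Finset.sum_congr rfl fun j _ => Finset.sum_congr rfl fun s _ => by ring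
      _ = ∑ i, ∑ j, x i * x j * (if i = j then (1 : ℝ) else 0) := by
          exact Finset.sum_congr rfl fun i _ => Finset.sum_congr rfl fun j _ => key i j
      _ = ∑ i, x i * x i := by
          simp [mul_ite, mul_zero, mul_one, Finset.sum_ite_eq]
      _ = 1 := hx
  set A : Fin d × Fin d → ℝ := fun pr => symOf g pr.1 pr.2 * symOf g pr.1 pr.2 with hAdef
  have hq : Υ₀.mulVec x ⬝ᵥ Υ₀.mulVec x = ∑ pr : Fin d × Fin d, A pr := by
    simp only [dotProduct, hmv, hAdef]
  set L : ℝ := ∑ pr ∈ Finset.univ.filter (fun pr : Fin d × Fin d => pr.1 < pr.2), A pr with hLdef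
  set D : ℝ := ∑ pr ∈ Finset.univ.filter (fun pr : Fin d × Fin d => pr.1 = pr.2), A pr with hDdef
  have hL : 0 ≤ L := Finset.sum_nonneg fun pr _ => mul_self_nonneg _
  have hD : 0 ≤ D := Finset.sum_nonneg fun pr _ => mul_self_nonneg _
  -- the sum over the flipped pairs equals L
  have hswap : (∑ pr ∈ Finset.univ.filter (fun pr : Fin d × Fin d => pr.2 < pr.1), A pr) = L := by
    refine Finset.sum_nbij' Prod.swap Prod.swap ?_ ?_ ?_ ?_ ?_
    · intro a ha
      simp only [Finset.mem_filter, Finset.mem_univ, true_and, Prod.fst_swap,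
        Prod.snd_swap] at ha ⊢
      exact ha
    · intro a ha
      simp only [Finset.mem_filter, Finset.mem_univ, true_and, Prod.fst_swap,
        Prod.snd_swap] at ha ⊢
      exact ha
    · exact fun a _ => Prod.swap_swap a
    · exact fun a _ => Prod.swap_swap a
    · intro a _
      simp only [hAdef, Prod.fst_swap, Prod.snd_swap]
      rw [symOf_symm]
  have hsplit : (∑ pr : Fin d × Fin d, A pr) = 2 * L + D := by
    have h1 := Finset.sum_filter_add_sum_filter_not Finset.univ
      (fun pr : Fin d × Fin d => pr.1 < pr.2) A
    have h2 := Finset.sum_filter_add_sum_filter_not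
      (Finset.univ.filter (fun pr : Fin d × Fin d => ¬ pr.1 < pr.2))
      (fun pr : Fin d × Fin d => pr.1 = pr.2) A
    have e1 : (Finset.univ.filter (fun pr : Fin d × Fin d => ¬ pr.1 < pr.2)).filter
        (fun pr : Fin d × Fin d => pr.1 = pr.2)
        = Finset.univ.filter (fun pr : Fin d × Fin d => pr.1 = pr.2) := by
      rw [Finset.filter_filter]
      apply Finset.filter_congr
      intro pr _
      constructor
      · exact fun hpr => hpr.2
      · exact fun hpr => ⟨by simp [hpr], hpr⟩
    have e2 : (Finset.univ.filter (fun pr : Fin d × Fin d => ¬ pr.1 < pr.2)).filter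
        (fun pr : Fin d × Fin d => ¬ pr.1 = pr.2)
        = Finset.univ.filter (fun pr : Fin d × Fin d => pr.2 < pr.1) := by
      rw [Finset.filter_filter]
      apply Finset.filter_congr
      intro pr _
      constructor
      · rintro ⟨hnlt, hne⟩
        exact lt_of_le_of_ne (not_lt.1 hnlt) (by exact fun e => hne e.symm)
      · exact fun hlt => ⟨not_lt.2 hlt.le, fun e => absurd (e ▸ hlt) (lt_irrefl _)⟩
    rw [e1, e2, hswap] at h2
    rw [← h1, ← h2, ← hLdef, ← hDdef]
    ring
  -- relate the unit-norm sum to L and D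
  have hLD : 4 * L + D = 1 := by
    set B : Fin d × Fin d → ℝ := fun pr => if pr.1 = pr.2 then A pr else 4 * A pr with hBdef
    have hB : (∑ s : {pr : Fin d × Fin d // pr.1 ≤ pr.2}, g s * g s)
        = ∑ s : {pr : Fin d × Fin d // pr.1 ≤ pr.2}, B s.1 := by
      apply Finset.sum_congr rfl
      rintro ⟨⟨p, q⟩, hpq⟩ _
      simp only [hBdef, hAdef, symOf, Matrix.of_apply]
      rcases lt_or_eq_of_le hpq with hlt | heq
      · rw [if_neg (ne_of_lt hlt), dif_pos hlt]
        ring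
      · have heq' : p = q := heq
        subst heq'
        rw [if_pos rfl, dif_neg (lt_irrefl _), dif_neg (lt_irrefl _)]
    have hsub : (∑ s : {pr : Fin d × Fin d // pr.1 ≤ pr.2}, B s.1)
        = ∑ pr ∈ Finset.univ.filter (fun pr : Fin d × Fin d => pr.1 ≤ pr.2), B pr := by
      exact (Finset.sum_subtype (p := fun pr : Fin d × Fin d => pr.1 ≤ pr.2)
        (Finset.univ.filter (fun pr : Fin d × Fin d => pr.1 ≤ pr.2))
        (fun pr => by simp) B).symm
    have hun : Finset.univ.filter (fun pr : Fin d × Fin d => pr.1 ≤ pr.2)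
        = Finset.univ.filter (fun pr : Fin d × Fin d => pr.1 < pr.2)
          ∪ Finset.univ.filter (fun pr : Fin d × Fin d => pr.1 = pr.2) := by
      ext pr
      simp only [Finset.mem_filter, Finset.mem_union, Finset.mem_univ, true_and]
      exact le_iff_lt_or_eq
    have hdisj : Disjoint (Finset.univ.filter (fun pr : Fin d × Fin d => pr.1 < pr.2))
        (Finset.univ.filter (fun pr : Fin d × Fin d => pr.1 = pr.2)) := by
      rw [Finset.disjoint_left]
      intro pr h1 h2
      simp only [Finset.mem_filter, Finset.mem_univ, true_and] at h1 h2
      exact absurd (h2 ▸ h1) (lt_irrefl _)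
    have hBlt : (∑ pr ∈ Finset.univ.filter (fun pr : Fin d × Fin d => pr.1 < pr.2), B pr)
        = 4 * L := by
      rw [hLdef, Finset.mul_sum]
      apply Finset.sum_congr rfl
      intro pr hpr
      simp only [Finset.mem_filter, Finset.mem_univ, true_and] at hpr
      simp only [hBdef, if_neg (ne_of_lt hpr)]
    have hBeq : (∑ pr ∈ Finset.univ.filter (fun pr : Fin d × Fin d => pr.1 = pr.2), B pr)
        = D := by
      rw [hDdef]
      apply Finset.sum_congr rfl
      intro pr hpr
      simp only [Finset.mem_filter, Finset.mem_univ, true_and] at hpr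
      simp only [hBdef, if_pos hpr]
    rw [hB, hsub, hun, Finset.sum_union hdisj, hBlt, hBeq] at hgg
    exact hgg
  rw [hq, hsplit]
  constructor <;> linarith
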